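/- Reshetnyak's inequality: for any four points x, y, u, v in a Hadamard space (H,d) one has d(x,y)² + d(u,v)² ≤ d(x,v)² + d(y,u)² + 2·d(x,u)·d(y,v). -/

import Mathlib

/-- A Hadamard space structure on a metric space `H`: a geodesic combination map
`geo x y t = (1-t)x ⊕ ty` satisfying the geodesic axioms and the CAT(0) inequality.
(Completeness is imposed via the `CompleteSpace` instance in the theorems.) -/
structure Hadamard (H : Type*) [MetricSpace H] : Type _ where
  geo : H → H → ℝ → H
  geo_zero : ∀ x y : H, geo x y 0 = x
  geo_one : ∀ x y : H, geo x y 1 = y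
  geo_dist : ∀ x y : H, ∀ s ∈ Set.Icc (0 : ℝ) 1, ∀ t ∈ Set.Icc (0 : ℝ) 1,
    dist (geo x y s) (geo x y t) = |s - t| * dist x y
  cat0 : ∀ z x y : H, ∀ t ∈ Set.Icc (0 : ℝ) 1,
    dist z (geo x y t) ^ 2
      ≤ (1 - t) * dist z x ^ 2 + t * dist z y ^ 2 - t * (1 - t) * dist x y ^ 2

/-- Reshetnyak's inequality in a Hadamard space. -/
theorem reshetnyak_inequality {H : Type*} [MetricSpace H] [CompleteSpace H]
    (G : Hadamard H) (x y u v : H) :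
    dist x y ^ 2 + dist u v ^ 2
      ≤ dist x v ^ 2 + dist y u ^ 2 + 2 * dist x u * dist y v := by
  rcases eq_or_lt_of_le (dist_nonneg : (0:ℝ) ≤ dist x u) with ha | ha
  · -- x = u
    have hxu : x = u := by rw [← dist_eq_zero]; exact ha.symm
    subst hxu
    simp only [dist_self, mul_zero, zero_mul, add_zero, dist_comm y x]
    linarith
  rcases eq_or_lt_of_le (dist_nonneg : (0:ℝ) ≤ dist y v) with hb | hb
  · -- y = v
    have hyv : y = v := by rw [← dist_eq_zero]; exact hb.symm
    subst hyv
    simp only [dist_self, mul_zero, add_zero, dist_comm u y]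
    linarith
  -- main case
  set a := dist x u with ha_def
  set b := dist y v with hb_def
  have hc : (0:ℝ) < a + b := by positivity
  have hc' : a + b ≠ 0 := ne_of_gt hc
  have ht : a / (a + b) ∈ Set.Icc (0:ℝ) 1 := by
    constructor
    · positivity
    · rw [div_le_one hc]; linarith
  set m := G.geo u v (a / (a + b)) with hm_def
  have h1 := G.cat0 x u v (a / (a + b)) ht
  have h2 := G.cat0 y u v (a / (a + b)) ht
  rw [← hm_def] at h1 h2
  set p := dist x m with hp_def
  set q := dist y m with hq_def
  have hp : 0 ≤ p := dist_nonneg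
  have hq : 0 ≤ q := dist_nonneg
  have htri : dist x y ≤ p + q := by
    calc dist x y ≤ dist x m + dist m y := dist_triangle x m y
    _ = p + q := by rw [dist_comm m y]
  have hsq : dist x y ^ 2 ≤ (p + q) ^ 2 := by
    nlinarith [dist_nonneg (x := x) (y := y)]
  have hkey : 2 * a * b * (p * q) ≤ b ^ 2 * p ^ 2 + a ^ 2 * q ^ 2 := by
    nlinarith [sq_nonneg (b * p - a * q)]
  have haux : (1 - a / (a + b)) = b / (a + b) := by field_simp; ring
  rw [haux] at h1 h2
  have h1' : (a + b) ^ 2 * p ^ 2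
      ≤ b * (a + b) * a ^ 2 + a * (a + b) * dist x v ^ 2 - a * b * dist u v ^ 2 := by
    have := mul_le_mul_of_nonneg_left h1 (by positivity : (0:ℝ) ≤ (a + b) ^ 2)
    calc (a + b) ^ 2 * p ^ 2
        ≤ (a + b) ^ 2 * (b / (a + b) * a ^ 2 + a / (a + b) * dist x v ^ 2
          - a / (a + b) * (b / (a + b)) * dist u v ^ 2) := this
      _ = b * (a + b) * a ^ 2 + a * (a + b) * dist x v ^ 2 - a * b * dist u v ^ 2 := by
          field_simp
  have h2' : (a + b) ^ 2 * q ^ 2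
      ≤ b * (a + b) * dist y u ^ 2 + a * (a + b) * b ^ 2 - a * b * dist u v ^ 2 := by
    have := mul_le_mul_of_nonneg_left h2 (by positivity : (0:ℝ) ≤ (a + b) ^ 2)
    calc (a + b) ^ 2 * q ^ 2
        ≤ (a + b) ^ 2 * (b / (a + b) * dist y u ^ 2 + a / (a + b) * b ^ 2
          - a / (a + b) * (b / (a + b)) * dist u v ^ 2) := this
      _ = b * (a + b) * dist y u ^ 2 + a * (a + b) * b ^ 2 - a * b * dist u v ^ 2 := by
          field_simp
  have hfinal : a * b * (a + b) * (dist x y ^ 2 + dist u v ^ 2)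
      ≤ a * b * (a + b) * (dist x v ^ 2 + dist y u ^ 2 + 2 * a * b) := by
    have A := mul_le_mul_of_nonneg_left h1' hb.le
    have B := mul_le_mul_of_nonneg_left h2' ha.le
    have C := mul_le_mul_of_nonneg_left hkey hc.le
    have D := mul_le_mul_of_nonneg_left hsq (by positivity : (0:ℝ) ≤ a * b * (a + b))
    linarith [A, B, C, D]
  exact le_of_mul_le_mul_left hfinal (by positivity)
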